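/- (Theorem 3, Jump Start Greedy approximation guarantee, stated for any execution trace satisfying the greedy invariant.) Let P be a finite nonempty set of paths, x an impact vector, ε ∈ (0,1), β ≥ 0, n = |V|, and let s* be an impact vector with d_{x+s*}(p) ≥ T for all p ∈ P and ‖s*‖ + β·n > 0. Let s_0 = 0 and, for t = 1,…,L, let s_t = s_{t−1} + ⟨v_t, x̂_t⟩ with x̂_t > 0, where, writing P_{t−1} = {p ∈ P : d_{x+s_{t−1}}(p) < T(1−ε)}, the following holds for every t: for every vertex u and every a ≥ β with a > 0, r_{P_{t−1},x+s_{t−1},v_t}(x̂_t)/x̂_t ≥ r_{P_{t−1},x+s_{t−1},u}(a)/a. If P_{L−1} ≠ ∅, then ‖s_L‖ = ∑_{t=1}^{L} x̂_t ≤ (‖s*‖ + β·n) · (ln(|P|·ε^{−1}) + 1). -/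

import Mathlib

/-- The capped length of a path `p` under impact vector `x`:
`d_x(p) = min(∑_{v ∈ p} f_v(x_v), T)`. -/
noncomputable def dLen {V : Type*} (f : V → ℝ → ℝ) (T : ℝ) (x : V → ℝ) (p : List V) : ℝ :=
  min ((p.map (fun v => f v (x v))).sum) T

/-- `r_{P,w,v}(a) = ∑_{p∈P} (d_{w+⟨v,a⟩}(p) − d_w(p))`. -/
noncomputable def rGain {V : Type*} [DecidableEq V] (f : V → ℝ → ℝ) (T : ℝ)
    (P : Finset (List V)) (w : V → ℝ) (v : V) (a : ℝ) : ℝ :=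
  ∑ p ∈ P, (dLen f T (w + Pi.single v a) p - dLen f T w p)

lemma min_marginal (T A B δ : ℝ) (hAB : A ≤ B) (hδ : 0 ≤ δ) :
    min (B + δ) T - min B T ≤ min (A + δ) T - min A T := by
  simp only [min_def]; split_ifs <;> linarith

lemma min_sum {V : Type*} (T A : ℝ) (s : Finset V) (δ : V → ℝ) (hδ : ∀ u ∈ s, 0 ≤ δ u) :
    min (A + ∑ u ∈ s, δ u) T - min A T ≤ ∑ u ∈ s, (min (A + δ u) T - min A T) := by
  induction s using Finset.cons_induction with
  | empty => simp
  | cons a s ha ih =>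
    rw [Finset.sum_cons, Finset.sum_cons]
    have h1 := ih (fun u hu => hδ u (Finset.mem_cons_of_mem hu))
    have hS : 0 ≤ ∑ u ∈ s, δ u := Finset.sum_nonneg (fun u hu => hδ u (Finset.mem_cons_of_mem hu))
    have h2 := min_marginal T A (A + ∑ u ∈ s, δ u) (δ a) (by linarith)
      (hδ a (Finset.mem_cons_self a s))
    have e : A + (δ a + ∑ u ∈ s, δ u) = (A + ∑ u ∈ s, δ u) + δ a := by ring
    rw [e]
    linarith

lemma single_sum {V : Type*} [DecidableEq V] (f : V → ℝ → ℝ) (w : V → ℝ) (u : V) (a : ℝ)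
    (p : List V) :
    (p.map (fun v => f v ((w + (Pi.single u a : V → ℝ)) v))).sum
      = (p.map (fun v => f v (w v))).sum + (p.count u : ℝ) * (f u (w u + a) - f u (w u)) := by
  induction p with
  | nil => simp
  | cons hd tl ih =>
    simp only [List.map_cons, List.sum_cons, List.count_cons, beq_iff_eq, ih]
    by_cases h : hd = u
    · subst h
      simp only [Pi.add_apply, Pi.single_eq_same, if_pos rfl]
      push_cast; ring
    · rw [if_neg h]
      have : (w + (Pi.single u a : V → ℝ)) hd = w hd := by
        simp [Pi.single_eq_of_ne h]
      rw [this]; push_cast; ring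

lemma full_sum {V : Type*} [Fintype V] [DecidableEq V] (f : V → ℝ → ℝ) (w y : V → ℝ)
    (p : List V) :
    (p.map (fun v => f v ((w + y) v))).sum
      = (p.map (fun v => f v (w v))).sum
        + ∑ u : V, (p.count u : ℝ) * (f u (w u + y u) - f u (w u)) := by
  induction p with
  | nil => simp
  | cons hd tl ih =>
    simp only [List.map_cons, List.sum_cons, List.count_cons, beq_iff_eq, ih]
    push_cast
    rw [Finset.sum_congr rfl (fun u _ => add_mul ((tl.count u : ℝ)) _ _), Finset.sum_add_distrib]
    have : ∑ u : V, (if hd = u then (1:ℝ) else 0) * (f u (w u + y u) - f u (w u))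
        = f hd (w hd + y hd) - f hd (w hd) := by
      simp
    rw [this]
    simp only [Pi.add_apply]
    ring

lemma dLen_le_T {V : Type*} (f : V → ℝ → ℝ) (T : ℝ) (x : V → ℝ) (p : List V) :
    dLen f T x p ≤ T := min_le_right _ _

lemma dLen_mono {V : Type*} (f : V → ℝ → ℝ) (T : ℝ)
    (hf : ∀ v, MonotoneOn (f v) (Set.Ici 0))
    (w w' : V → ℝ) (hw : ∀ u, 0 ≤ w u) (hww' : ∀ u, w u ≤ w' u) (p : List V) :
    dLen f T w p ≤ dLen f T w' p := by
  apply min_le_min _ le_rfl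
  apply List.sum_le_sum
  intro v hv
  exact hf v (Set.mem_Ici.2 (hw v)) (Set.mem_Ici.2 ((hw v).trans (hww' v))) (hww' v)

lemma dLen_nonneg {V : Type*} (f : V → ℝ → ℝ) (T : ℝ) (hT : 0 ≤ T)
    (hf0 : ∀ v y, 0 ≤ y → 0 ≤ f v y)
    (w : V → ℝ) (hw : ∀ u, 0 ≤ w u) (p : List V) : 0 ≤ dLen f T w p := by
  apply le_min _ hT
  apply List.sum_nonneg
  intro a ha
  obtain ⟨v, _, rfl⟩ := List.mem_map.1 ha
  exact hf0 v _ (hw v)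

lemma dLen_subadd {V : Type*} [Fintype V] [DecidableEq V] (f : V → ℝ → ℝ) (T : ℝ)
    (hf : ∀ v, MonotoneOn (f v) (Set.Ici 0))
    (w y : V → ℝ) (hw : ∀ u, 0 ≤ w u) (hy : ∀ u, 0 ≤ y u) (p : List V) :
    dLen f T (w + y) p - dLen f T w p
      ≤ ∑ u : V, (dLen f T (w + Pi.single u (y u)) p - dLen f T w p) := by
  set A := (p.map (fun v => f v (w v))).sum with hA
  set δ : V → ℝ := fun u => (p.count u : ℝ) * (f u (w u + y u) - f u (w u)) with hδdef
  have hδ : ∀ u ∈ Finset.univ (α := V), 0 ≤ δ u := by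
    intro u _
    apply mul_nonneg (Nat.cast_nonneg _)
    have := hf u (Set.mem_Ici.2 (hw u))
      (Set.mem_Ici.2 (by linarith [hw u, hy u] : (0:ℝ) ≤ w u + y u)) (by linarith [hy u])
    linarith
  have h1 : dLen f T (w + y) p = min (A + ∑ u : V, δ u) T := by
    rw [dLen, full_sum]
  have h2 : ∀ u, dLen f T (w + Pi.single u (y u)) p = min (A + δ u) T := fun u => by
    rw [dLen, single_sum]
  have h3 : dLen f T w p = min A T := rfl
  rw [h1, h3]
  calc min (A + ∑ u : V, δ u) T - min A T ≤ ∑ u : V, (min (A + δ u) T - min A T) :=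
        min_sum T A Finset.univ δ hδ
    _ = _ := by
        apply Finset.sum_congr rfl
        intro u _
        rw [h2 u]

lemma single_nonneg' {V : Type*} [DecidableEq V] (u : V) (a : ℝ) (ha : 0 ≤ a) (z : V) :
    (0:ℝ) ≤ (Pi.single u a : V → ℝ) z := by
  rcases eq_or_ne z u with h | h
  · subst h; rw [Pi.single_eq_same]; exact ha
  · rw [Pi.single_eq_of_ne h]

lemma step1_lemma {V : Type*} [Fintype V] [DecidableEq V] (f : V → ℝ → ℝ) (T : ℝ)
    (hf : ∀ v, MonotoneOn (f v) (Set.Ici 0))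
    (Q : Finset (List V)) (w sStar : V → ℝ) (β : ℝ)
    (hw : ∀ u, 0 ≤ w u) (hs : ∀ u, 0 ≤ sStar u) (hβ : 0 ≤ β)
    (hQT : ∀ p ∈ Q, dLen f T (w + sStar) p = T) :
    ∑ p ∈ Q, (T - dLen f T w p) ≤ ∑ u : V, rGain f T Q w u (sStar u + β) := by
  have htermwise : ∀ p ∈ Q, T - dLen f T w p
      ≤ ∑ u : V, (dLen f T (w + Pi.single u (sStar u + β)) p - dLen f T w p) := by
    intro p hp
    have hsub := dLen_subadd f T hf w sStar hw hs p
    rw [hQT p hp] at hsub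
    refine le_trans hsub (Finset.sum_le_sum ?_)
    intro u _
    have hmono : dLen f T (w + Pi.single u (sStar u)) p
        ≤ dLen f T (w + Pi.single u (sStar u + β)) p := by
      apply dLen_mono f T hf
      · intro z
        have := single_nonneg' u (sStar u) (hs u) z
        simp only [Pi.add_apply]; linarith [hw z]
      · intro z
        simp only [Pi.add_apply]
        rcases eq_or_ne z u with h | h
        · subst h; rw [Pi.single_eq_same, Pi.single_eq_same]; linarith [hβ]
        · rw [Pi.single_eq_of_ne h, Pi.single_eq_of_ne h]
    linarith
  have h1 : ∑ p ∈ Q, (T - dLen f T w p)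
      ≤ ∑ p ∈ Q, ∑ u : V, (dLen f T (w + Pi.single u (sStar u + β)) p - dLen f T w p) :=
    Finset.sum_le_sum htermwise
  have h2 : ∑ p ∈ Q, ∑ u : V, (dLen f T (w + Pi.single u (sStar u + β)) p - dLen f T w p)
      = ∑ u : V, rGain f T Q w u (sStar u + β) := by
    rw [Finset.sum_comm]
    simp only [rGain]
  exact le_trans h1 (le_of_eq h2)

set_option maxHeartbeats 1000000 in
open scoped Classical in
/-- Theorem 3: Jump Start Greedy approximation guarantee, stated for
any execution trace satisfying the greedy invariant. -/
theorem stmt10 {V : Type*} [Fintype V] [DecidableEq V]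
    (f : V → ℝ → ℝ) (T : ℝ) (hT : 0 < T)
    (hf : ∀ v, MonotoneOn (f v) (Set.Ici 0))
    (hf0 : ∀ v y, 0 ≤ y → 0 ≤ f v y)
    (P : Finset (List V)) (hPne : P.Nonempty) (hP : ∀ p ∈ P, p.Nodup)
    (x : V → ℝ) (hx : ∀ u, 0 ≤ x u)
    (ε : ℝ) (hε0 : 0 < ε) (hε1 : ε < 1)
    (β : ℝ) (hβ : 0 ≤ β)
    (sStar : V → ℝ) (hsStar : ∀ u, 0 ≤ sStar u)
    (hopt : ∀ p ∈ P, T ≤ dLen f T (x + sStar) p)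
    (hpos : 0 < (∑ u : V, sStar u) + β * (Fintype.card V : ℝ))
    (L : ℕ) (hL : 1 ≤ L)
    (s : ℕ → V → ℝ) (v : ℕ → V) (xhat : ℕ → ℝ)
    (hs0 : s 0 = 0)
    (hxhat : ∀ t, 1 ≤ t → t ≤ L → 0 < xhat t)
    (hstep : ∀ t, 1 ≤ t → t ≤ L → s t = s (t - 1) + Pi.single (v t) (xhat t))
    (Pt : ℕ → Finset (List V))
    (hPt : ∀ t, Pt t = P.filter (fun p => dLen f T (x + s t) p < T * (1 - ε)))
    (hgreedy : ∀ t, 1 ≤ t → t ≤ L → ∀ u, ∀ a : ℝ, β ≤ a → 0 < a →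
      rGain f T (Pt (t - 1)) (x + s (t - 1)) u a / a
        ≤ rGain f T (Pt (t - 1)) (x + s (t - 1)) (v t) (xhat t) / xhat t)
    (hfinal : (Pt (L - 1)).Nonempty) :
    ∑ t ∈ Finset.Icc 1 L, xhat t ≤
      ((∑ u : V, sStar u) + β * (Fintype.card V : ℝ)) *
        (Real.log ((P.card : ℝ) * ε⁻¹) + 1) := by
  obtain ⟨m, rfl⟩ : ∃ m, L = m + 1 := ⟨L - 1, (Nat.succ_pred_eq_of_pos hL).symm⟩
  have hm1 : m + 1 - 1 = m := by omega
  rw [hm1] at hfinal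
  set K := (∑ u : V, sStar u) + β * (Fintype.card V : ℝ) with hK
  have hKpos : 0 < K := hpos
  clear_value K
  -- nonnegativity of s t
  have snn : ∀ t, t ≤ m + 1 → ∀ u, 0 ≤ s t u := by
    intro t
    induction t with
    | zero => intro _ u; rw [hs0]; exact le_rfl
    | succ n ih =>
      intro hn u
      have h1 : 1 ≤ n + 1 := Nat.le_add_left 1 n
      rw [hstep (n + 1) h1 hn, Nat.add_sub_cancel, Pi.add_apply]
      have := ih (le_trans (Nat.le_succ n) hn) u
      have h2 := single_nonneg' (v (n + 1)) (xhat (n + 1)) (hxhat (n + 1) h1 hn).le u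
      linarith
  have wnn : ∀ t, t ≤ m + 1 → ∀ u, 0 ≤ (x + s t) u := by
    intro t ht u
    have := snn t ht u
    have := hx u
    simp only [Pi.add_apply]; linarith
  -- monotonicity of s along a step
  have smono : ∀ t, 1 ≤ t → t ≤ m + 1 → ∀ u, s (t - 1) u ≤ s t u := by
    intro t h1 h2 u
    rw [hstep t h1 h2, Pi.add_apply]
    have := single_nonneg' (v t) (xhat t) (hxhat t h1 h2).le u
    linarith
  -- Pt is a subset of P
  have PtsubP : ∀ t, Pt t ⊆ P := by
    intro t
    rw [hPt t]; exact Finset.filter_subset _ _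
  -- Pt decreasing along steps
  have Ptmono : ∀ t, 1 ≤ t → t ≤ m + 1 → Pt t ⊆ Pt (t - 1) := by
    intro t h1 h2 p hp
    rw [hPt t, Finset.mem_filter] at hp
    rw [hPt (t - 1), Finset.mem_filter]
    refine ⟨hp.1, lt_of_le_of_lt ?_ hp.2⟩
    exact dLen_mono f T hf _ _ (wnn (t - 1) (le_trans (Nat.sub_le t 1) h2))
      (fun u => by simpa using smono t h1 h2 u) p
  -- chain
  have Ptchain : ∀ k t, t + k ≤ m + 1 → Pt (t + k) ⊆ Pt t := by
    intro k
    induction k with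
    | zero => intro t _; exact subset_rfl
    | succ n ih =>
      intro t h
      have h1 : Pt (t + (n + 1)) ⊆ Pt (t + n) := by
        have := Ptmono (t + n + 1) (Nat.le_add_left 1 _) (by omega)
        simpa [Nat.add_sub_cancel, Nat.add_assoc] using this
      exact h1.trans (ih t (by omega))
  have Ptne : ∀ t, t ≤ m → (Pt t).Nonempty := by
    intro t ht
    obtain ⟨p, hp⟩ := hfinal
    have : Pt m ⊆ Pt t := by
      have := Ptchain (m - t) t (by omega)
      rwa [Nat.add_sub_cancel' ht] at this
    exact ⟨p, this hp⟩
  -- the potential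
  set Φ : ℕ → ℝ := fun t => ∑ p ∈ Pt t, (T - dLen f T (x + s t) p) with hΦ
  have Φeq : ∀ t, Φ t = ∑ p ∈ Pt t, (T - dLen f T (x + s t) p) := fun t => by
    simp only [hΦ]
  clear_value Φ
  have Φnonneg : ∀ t, 0 ≤ Φ t := by
    intro t
    rw [Φeq]
    apply Finset.sum_nonneg
    intro p _
    have := dLen_le_T f T (x + s t) p
    linarith
  have Φpos : ∀ t, t ≤ m → 0 < Φ t := by
    intro t ht
    rw [Φeq]
    apply Finset.sum_pos
    · intro p hp
      rw [hPt t, Finset.mem_filter] at hp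
      have := hp.2
      nlinarith [mul_pos hT hε0]
    · exact Ptne t ht
  have ΦgeTε : ∀ t, t ≤ m → T * ε ≤ Φ t := by
    intro t ht
    obtain ⟨p, hp⟩ := Ptne t ht
    have hterm : T * ε ≤ T - dLen f T (x + s t) p := by
      have hp2 := hp
      rw [hPt t, Finset.mem_filter] at hp2
      nlinarith [hp2.2]
    rw [Φeq]
    refine le_trans hterm ?_
    exact Finset.single_le_sum (f := fun p => T - dLen f T (x + s t) p)
      (fun q _ => sub_nonneg.2 (dLen_le_T f T (x + s t) q)) hp
  -- key inequality per step
  have key : ∀ t, 1 ≤ t → t ≤ m + 1 →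
      xhat t * Φ (t - 1) ≤ K * rGain f T (Pt (t - 1)) (x + s (t - 1)) (v t) (xhat t) := by
    intro t h1 h2
    set w := x + s (t - 1) with hw
    set G := rGain f T (Pt (t - 1)) w (v t) (xhat t) with hG
    have ht1 : t - 1 ≤ m + 1 := le_trans (Nat.sub_le t 1) h2
    have hwnn : ∀ u, 0 ≤ w u := wnn (t - 1) ht1
    have hxt := hxhat t h1 h2
    have step1 : Φ (t - 1) ≤ ∑ u : V, rGain f T (Pt (t - 1)) w u (sStar u + β) := by
      have hQT : ∀ p ∈ Pt (t - 1), dLen f T (w + sStar) p = T := by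
        intro p hp
        have hpP : p ∈ P := PtsubP (t - 1) hp
        refine le_antisymm (dLen_le_T f T _ p) ?_
        refine le_trans (hopt p hpP) (dLen_mono f T hf _ _ ?_ ?_ p)
        · intro u; simp only [Pi.add_apply]; linarith [hx u, hsStar u]
        · intro u
          simp only [hw, Pi.add_apply]
          have := snn (t - 1) ht1 u
          linarith
      have hΦeq : Φ (t - 1) = ∑ p ∈ Pt (t - 1), (T - dLen f T w p) := by
        rw [Φeq]
      rw [hΦeq]
      exact step1_lemma f T hf (Pt (t - 1)) w sStar β hwnn hsStar hβ hQT
    -- step 2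
    have step2 : ∀ u : V, rGain f T (Pt (t - 1)) w u (sStar u + β)
        ≤ (sStar u + β) * (G / xhat t) := by
      intro u
      rcases lt_or_ge 0 (sStar u + β) with h | h
      · have := hgreedy t h1 h2 u (sStar u + β) (by linarith [hsStar u]) h
        rw [div_le_div_iff₀ h hxt] at this
        rw [div_eq_mul_inv, ← mul_assoc]
        calc rGain f T (Pt (t - 1)) w u (sStar u + β)
            = rGain f T (Pt (t - 1)) w u (sStar u + β) * xhat t * (xhat t)⁻¹ := by
              field_simp
          _ ≤ (sStar u + β) * G * (xhat t)⁻¹ := by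
              apply mul_le_mul_of_nonneg_right _ (inv_nonneg.2 hxt.le)
              calc rGain f T (Pt (t - 1)) w u (sStar u + β) * xhat t
                  ≤ rGain f T (Pt (t - 1)) w (v t) (xhat t) * (sStar u + β) := this
                _ = (sStar u + β) * G := by rw [hG]; ring
      · have h0 : sStar u + β = 0 := le_antisymm h (by linarith [hsStar u])
        rw [h0]
        simp [rGain, Pi.single_zero]
    -- combine
    have step3 : Φ (t - 1) ≤ K * (G / xhat t) := by
      calc Φ (t - 1) ≤ ∑ u : V, rGain f T (Pt (t - 1)) w u (sStar u + β) := step1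
        _ ≤ ∑ u : V, (sStar u + β) * (G / xhat t) := Finset.sum_le_sum (fun u _ => step2 u)
        _ = (∑ u : V, (sStar u + β)) * (G / xhat t) := by rw [Finset.sum_mul]
        _ = K * (G / xhat t) := by
            congr 1
            rw [Finset.sum_add_distrib, Finset.sum_const, nsmul_eq_mul, Finset.card_univ, hK]
            try ring
    have := mul_le_mul_of_nonneg_left step3 hxt.le
    calc xhat t * Φ (t - 1) ≤ xhat t * (K * (G / xhat t)) := this
      _ = K * G := by field_simp
  -- gain is at most the potential drop
  have drop : ∀ t, 1 ≤ t → t ≤ m + 1 →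
      rGain f T (Pt (t - 1)) (x + s (t - 1)) (v t) (xhat t) ≤ Φ (t - 1) - Φ t := by
    intro t h1 h2
    have estep : (x + s (t - 1)) + Pi.single (v t) (xhat t) = x + s t := by
      rw [hstep t h1 h2, add_assoc]
    have e1 : rGain f T (Pt (t - 1)) (x + s (t - 1)) (v t) (xhat t)
        = ∑ p ∈ Pt (t - 1), (dLen f T (x + s t) p - dLen f T (x + s (t - 1)) p) := by
      unfold rGain
      apply Finset.sum_congr rfl
      intro p _
      rw [estep]
    have e2 : Φ t ≤ ∑ p ∈ Pt (t - 1), (T - dLen f T (x + s t) p) := by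
      rw [Φeq]
      apply Finset.sum_le_sum_of_subset_of_nonneg (Ptmono t h1 h2)
      intro p _ _
      linarith [dLen_le_T f T (x + s t) p]
    have e3 : Φ (t - 1) - ∑ p ∈ Pt (t - 1), (T - dLen f T (x + s t) p)
        = ∑ p ∈ Pt (t - 1), (dLen f T (x + s t) p - dLen f T (x + s (t - 1)) p) := by
      rw [Φeq, ← Finset.sum_sub_distrib]
      apply Finset.sum_congr rfl
      intro p _
      ring
    rw [e1, ← e3]
    linarith
  -- per-step bound with logs, t ≤ m
  have logstep : ∀ t, 1 ≤ t → t ≤ m →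
      xhat t ≤ K * (Real.log (Φ (t - 1)) - Real.log (Φ t)) := by
    intro t h1 h2
    have hΦt : 0 < Φ t := Φpos t h2
    have hΦt1 : 0 < Φ (t - 1) := Φpos (t - 1) (by omega)
    have hk := key t h1 (by omega)
    have hd := drop t h1 (by omega)
    have hlog := Real.log_le_sub_one_of_pos (div_pos hΦt hΦt1)
    rw [Real.log_div (ne_of_gt hΦt) (ne_of_gt hΦt1)] at hlog
    have hdiv : Φ t / Φ (t - 1) * Φ (t - 1) = Φ t := div_mul_cancel₀ _ (ne_of_gt hΦt1)
    have h5 : (Real.log (Φ t) - Real.log (Φ (t - 1))) * Φ (t - 1) ≤ Φ t - Φ (t - 1) := by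
      nlinarith
    have hc1 : K * rGain f T (Pt (t - 1)) (x + s (t - 1)) (v t) (xhat t)
        ≤ K * (Φ (t - 1) - Φ t) := mul_le_mul_of_nonneg_left hd hKpos.le
    have hc2 : K * (Φ (t - 1) - Φ t)
        ≤ K * ((Real.log (Φ (t - 1)) - Real.log (Φ t)) * Φ (t - 1)) := by
      apply mul_le_mul_of_nonneg_left _ hKpos.le
      nlinarith
    have h7 : xhat t * Φ (t - 1) ≤ K * (Real.log (Φ (t - 1)) - Real.log (Φ t)) * Φ (t - 1) := by
      nlinarith
    exact (mul_le_mul_iff_of_pos_right hΦt1).mp h7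
  -- last step bound
  have lastbound : xhat (m + 1) ≤ K := by
    have hk := key (m + 1) (Nat.le_add_left 1 m) le_rfl
    have hd := drop (m + 1) (Nat.le_add_left 1 m) le_rfl
    rw [hm1] at hk hd
    have hΦm : 0 < Φ m := Φpos m le_rfl
    have hΦL : 0 ≤ Φ (m + 1) := Φnonneg (m + 1)
    have hc1 : K * rGain f T (Pt m) (x + s m) (v (m + 1)) (xhat (m + 1))
        ≤ K * (Φ m - Φ (m + 1)) := mul_le_mul_of_nonneg_left hd hKpos.le
    have : xhat (m + 1) * Φ m ≤ K * Φ m := by nlinarith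
    exact (mul_le_mul_iff_of_pos_right hΦm).mp this
  -- telescoping sum
  have tel : ∀ n : ℕ, ∑ t ∈ Finset.Icc 1 n, (Real.log (Φ (t - 1)) - Real.log (Φ t))
      = Real.log (Φ 0) - Real.log (Φ n) := by
    intro n
    induction n with
    | zero => simp
    | succ k ih =>
      rw [Finset.sum_Icc_succ_top (by omega : 1 ≤ k + 1), ih]
      simp only [Nat.add_sub_cancel]
      ring
  -- bounding log Φ 0 - log Φ m
  have hPcard : (0:ℝ) < (P.card : ℝ) := by
    exact_mod_cast Finset.card_pos.2 hPne
  have hΦ0le : Φ 0 ≤ (P.card : ℝ) * T := by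
    rw [Φeq]
    have h1 : ∑ p ∈ Pt 0, (T - dLen f T (x + s 0) p) ≤ ∑ p ∈ Pt 0, T := by
      apply Finset.sum_le_sum
      intro p _
      have := dLen_nonneg f T hT.le hf0 (x + s 0) (wnn 0 (by omega)) p
      linarith
    have h2 : ∑ p ∈ Pt 0, T = ((Pt 0).card : ℝ) * T := by
      rw [Finset.sum_const, nsmul_eq_mul]
    have h3 : ((Pt 0).card : ℝ) * T ≤ (P.card : ℝ) * T := by
      apply mul_le_mul_of_nonneg_right _ hT.le
      exact_mod_cast Finset.card_le_card (PtsubP 0)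
    linarith
  have hlogdiff : Real.log (Φ 0) - Real.log (Φ m) ≤ Real.log ((P.card : ℝ) * ε⁻¹) := by
    have h1 : Real.log (Φ 0) ≤ Real.log ((P.card : ℝ) * T) :=
      Real.log_le_log (Φpos 0 (by omega)) hΦ0le
    have h2 : Real.log (T * ε) ≤ Real.log (Φ m) :=
      Real.log_le_log (mul_pos hT hε0) (ΦgeTε m le_rfl)
    have e1 : Real.log ((P.card : ℝ) * T) = Real.log (P.card : ℝ) + Real.log T :=
      Real.log_mul (ne_of_gt hPcard) (ne_of_gt hT)
    have e2 : Real.log (T * ε) = Real.log T + Real.log ε :=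
      Real.log_mul (ne_of_gt hT) (ne_of_gt hε0)
    have e3 : Real.log ((P.card : ℝ) * ε⁻¹) = Real.log (P.card : ℝ) - Real.log ε := by
      rw [Real.log_mul (ne_of_gt hPcard) (by positivity), Real.log_inv]
      ring
    rw [e3]
    linarith
  -- assemble
  have hsplit : ∑ t ∈ Finset.Icc 1 (m + 1), xhat t
      = ∑ t ∈ Finset.Icc 1 m, xhat t + xhat (m + 1) :=
    Finset.sum_Icc_succ_top (by omega) xhat
  have hsum1 : ∑ t ∈ Finset.Icc 1 m, xhat t
      ≤ K * (Real.log (Φ 0) - Real.log (Φ m)) := by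
    have h1 : ∑ t ∈ Finset.Icc 1 m, xhat t
        ≤ ∑ t ∈ Finset.Icc 1 m, K * (Real.log (Φ (t - 1)) - Real.log (Φ t)) := by
      apply Finset.sum_le_sum
      intro t ht
      rw [Finset.mem_Icc] at ht
      exact logstep t ht.1 ht.2
    have h2 : ∑ t ∈ Finset.Icc 1 m, K * (Real.log (Φ (t - 1)) - Real.log (Φ t))
        = K * (Real.log (Φ 0) - Real.log (Φ m)) := by
      rw [← Finset.mul_sum, tel m]
    linarith
  have final : K * (Real.log (Φ 0) - Real.log (Φ m)) ≤ K * Real.log ((P.card : ℝ) * ε⁻¹) :=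
    mul_le_mul_of_nonneg_left hlogdiff hKpos.le
  rw [hsplit]
  have : K * Real.log ((P.card : ℝ) * ε⁻¹) + K = K * (Real.log ((P.card : ℝ) * ε⁻¹) + 1) := by
    ring
  linarith
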